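/- Let A be a real symmetric n×n matrix with A ≠ 0 satisfying A² = (tr(A)/2)·A. Then the eigenvalue tr(A)/2 of A has multiplicity exactly 2 and the eigenvalue 0 has multiplicity n−2, and moreover tr(A)² = 2·‖A‖², where ‖A‖² denotes the sum of squares of the entries of A. -/

import Mathlib

open scoped Classical in
theorem stmt_1 (n : ℕ) (A : Matrix (Fin n) (Fin n) ℝ)
    (hA : A.IsHermitian) (hA0 : A ≠ 0)
    (h : A * A = (A.trace / 2) • A) :
    (Finset.univ.filter fun i => hA.eigenvalues i = A.trace / 2).card = 2 ∧
    (Finset.univ.filter fun i => hA.eigenvalues i = 0).card = n - 2 ∧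
    A.trace ^ 2 = 2 * ∑ i, ∑ j, (A i j) ^ 2 := by
  set t := A.trace with ht
  -- eigenvalue equation: each eigenvalue μ satisfies μ^2 = (t/2) * μ
  have heig : ∀ i, hA.eigenvalues i ^ 2 = (t / 2) * hA.eigenvalues i := by
    intro i
    have hv := hA.mulVec_eigenvectorBasis i
    have hvne : (⇑(hA.eigenvectorBasis i) : Fin n → ℝ) ≠ 0 := by
      have := hA.eigenvectorBasis.orthonormal.ne_zero i
      intro hz
      apply this
      ext j; exact congrFun hz j
    have h1 : (A * A).mulVec ⇑(hA.eigenvectorBasis i)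
        = (hA.eigenvalues i ^ 2) • ⇑(hA.eigenvectorBasis i) := by
      rw [← Matrix.mulVec_mulVec, hv, Matrix.mulVec_smul, hv, smul_smul, sq]
    have h2 : (A * A).mulVec ⇑(hA.eigenvectorBasis i)
        = ((t / 2) * hA.eigenvalues i) • ⇑(hA.eigenvectorBasis i) := by
      rw [h, Matrix.smul_mulVec, hv, smul_smul]
    rw [h1] at h2
    exact smul_left_injective ℝ hvne h2
  -- trace = sum of eigenvalues
  have htr : t = ∑ i, hA.eigenvalues i := by
    nth_rewrite 1 [ht]
    rw [hA.trace_eq_sum_eigenvalues]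
    simp
  -- trace of A*A equals sum of squares of entries
  have hAA : (A * A).trace = ∑ i, ∑ j, (A i j) ^ 2 := by
    rw [Matrix.trace]
    congr 1; ext i
    rw [Matrix.diag_apply, Matrix.mul_apply]
    congr 1; ext j
    rw [sq, ← hA.apply i j]
    simp [mul_comm]
  -- from h: trace(A*A) = t^2/2
  have hAAt : (A * A).trace = t ^ 2 / 2 := by
    rw [h, Matrix.trace_smul]
    simp [smul_eq_mul]
    ring
  have hsum : ∑ i, ∑ j, (A i j) ^ 2 = t ^ 2 / 2 := by rw [← hAA, hAAt]
  -- A ≠ 0 gives sum of squares > 0, hence t ≠ 0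
  have hpos : 0 < ∑ i, ∑ j, (A i j) ^ 2 := by
    by_contra hle
    push_neg at hle
    have hnn : 0 ≤ ∑ i, ∑ j, (A i j) ^ 2 :=
      Finset.sum_nonneg fun i _ => Finset.sum_nonneg fun j _ => sq_nonneg _
    have hz : ∑ i, ∑ j, (A i j) ^ 2 = 0 := le_antisymm hle hnn
    apply hA0
    ext i j
    have h1 := (Finset.sum_eq_zero_iff_of_nonneg
      (fun i _ => Finset.sum_nonneg fun j _ => sq_nonneg (A i j))).mp hz i (Finset.mem_univ i)
    have h2 := (Finset.sum_eq_zero_iff_of_nonneg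
      (fun j _ => sq_nonneg (A i j))).mp h1 j (Finset.mem_univ j)
    simpa using sq_eq_zero_iff.mp h2
  have htne : t ≠ 0 := by
    intro h0
    rw [h0] at hsum
    simp at hsum
    rw [hsum] at hpos
    exact lt_irrefl 0 (by simpa using hpos)
  have hhalf : t / 2 ≠ 0 := div_ne_zero htne two_ne_zero
  -- each eigenvalue is 0 or t/2
  have hdich : ∀ i, hA.eigenvalues i = 0 ∨ hA.eigenvalues i = t / 2 := by
    intro i
    have := heig i
    have : hA.eigenvalues i * (hA.eigenvalues i - t / 2) = 0 := by ring_nf; ring_nf at this; linarith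
    rcases mul_eq_zero.mp this with h1 | h1
    · exact Or.inl h1
    · exact Or.inr (by linarith)
  set S := Finset.univ.filter fun i => hA.eigenvalues i = t / 2 with hS
  set Z := Finset.univ.filter fun i => hA.eigenvalues i = 0 with hZ
  -- sum over all = sum over S
  have hsplit : ∑ i, hA.eigenvalues i = S.card * (t / 2) := by
    rw [← Finset.sum_filter_add_sum_filter_not Finset.univ (fun i => hA.eigenvalues i = t / 2)]
    have h1 : ∑ i ∈ Finset.univ.filter (fun i => hA.eigenvalues i = t / 2), hA.eigenvalues i
        = S.card * (t / 2) := by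
      rw [Finset.sum_congr rfl (fun i hi => (Finset.mem_filter.mp hi).2)]
      simp [mul_comm]
      exact Or.inl rfl
    have h2 : ∑ i ∈ Finset.univ.filter (fun i => ¬ hA.eigenvalues i = t / 2), hA.eigenvalues i
        = 0 := by
      apply Finset.sum_eq_zero
      intro i hi
      rcases hdich i with h3 | h3
      · exact h3
      · exact absurd h3 (Finset.mem_filter.mp hi).2
    rw [h1, h2, add_zero]
  have hcardS : S.card = 2 := by
    have : (S.card : ℝ) * (t / 2) = t := by rw [← hsplit, ← htr]
    have h2 : (S.card : ℝ) = 2 := by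
      field_simp at this
      rcases mul_eq_mul_right_iff.mp (by linarith : (S.card : ℝ) * t = 2 * t) with h | h
      · exact h
      · exact absurd h htne
    exact_mod_cast h2
  have hZcompl : Z = Finset.univ.filter fun i => ¬ hA.eigenvalues i = t / 2 := by
    ext i
    simp only [hZ, Finset.mem_filter, Finset.mem_univ, true_and]
    constructor
    · intro h0; rw [h0]; exact fun hc => hhalf hc.symm
    · intro h0; rcases hdich i with h1 | h1
      · exact h1
      · exact absurd h1 h0
  have hcardZ : Z.card = n - 2 := by
    have := Finset.card_filter_add_card_filter_not (s := Finset.univ)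
      (p := fun i => hA.eigenvalues i = t / 2)
    rw [← hS, ← hZcompl] at this
    simp only [Finset.card_univ, Fintype.card_fin] at this
    omega
  refine ⟨hcardS, hcardZ, ?_⟩
  rw [hsum]; ring
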